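/- Define the matrix R, indexed by pairs of indices, with entries R_{μν}^{στ} := ℓ_{μν} δ_{μτ} δ_{νσ} + p_{μν} δ_{μ'τ} δ_{ν'σ} ∈ k. Then R is involutive: for all μ,ν,σ,τ ∈ {0,1,2,3} one has Σ_{α,β} R_{μν}^{αβ} R_{αβ}^{στ} = δ_{μσ} δ_{ντ}; that is, R² is the identity matrix on k¹⁶ (in particular R is invertible). -/

import Mathlib

/-- For distinct `μ ν`, `pr μ ν = (μ', ν')`, the unique pair with
`{μ', ν'} = {0,1,2,3} \ {μ, ν}` and `μ' > ν'` iff `μ > ν`; `pr μ μ = (μ, μ)`. -/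
def pr : Fin 4 → Fin 4 → Fin 4 × Fin 4 :=
  ![![(0,0),(2,3),(1,3),(1,2)],
    ![(3,2),(1,1),(0,3),(0,2)],
    ![(3,1),(3,0),(2,2),(0,1)],
    ![(2,1),(2,0),(1,0),(3,3)]]

/-- The table `ν ↦ (ν̃, μ_ν, μ̃_ν)`. -/
def tnu : Fin 4 → Fin 4 × Fin 4 × Fin 4 :=
  ![(1,2,3),(0,3,2),(3,0,1),(2,1,0)]

/-- The conditions on the parameters `ℓ_{μν}`, `p_{μν}` of Definition 2.1. -/
def GoodParams {k : Type*} [Field k] (ℓ p : Fin 4 → Fin 4 → k) : Prop :=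
  (∀ μ : Fin 4, ℓ μ μ = 1) ∧
  (∀ μ ν : Fin 4, ℓ μ ν = ℓ ν μ) ∧
  (∀ μ ν : Fin 4, ℓ (pr μ ν).1 (pr μ ν).2 = ℓ μ ν) ∧
  (∀ μ ν : Fin 4, p μ ν = - p ν μ) ∧
  (∀ μ ν : Fin 4, ℓ μ ν ^ 2 + p μ ν * p (pr μ ν).2 (pr μ ν).1 = 1)

/-- `x` satisfies the `A_{ℓ,p}`-relations: `x_μ x_ν = ℓ_{μν} x_ν x_μ + p_{μν} x_{ν'} x_{μ'}`. -/
def AlpRel {k A : Type*} [Field k] [Ring A] [Algebra k A]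
    (ℓ p : Fin 4 → Fin 4 → k) (x : Fin 4 → A) : Prop :=
  ∀ μ ν : Fin 4,
    x μ * x ν = ℓ μ ν • (x ν * x μ) + p μ ν • (x (pr μ ν).2 * x (pr μ ν).1)

/-- The matrix `R_{μν}^{στ} := ℓ_{μν} δ_{μτ} δ_{νσ} + p_{μν} δ_{μ'τ} δ_{ν'σ}`. -/
def Rmat {k : Type*} [Field k] (ℓ p : Fin 4 → Fin 4 → k)
    (μ ν σ τ : Fin 4) : k :=
  ℓ μ ν * (if μ = τ then 1 else 0) * (if ν = σ then 1 else 0) +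
    p μ ν * (if (pr μ ν).1 = τ then 1 else 0) * (if (pr μ ν).2 = σ then 1 else 0)

/-- `R` is involutive, `Σ_{α,β} R_{μν}^{αβ} R_{αβ}^{στ} = δ_{μσ} δ_{ντ}`;
that is, `R² = 1` as a matrix on `k¹⁶` (in particular `R` is invertible). -/
theorem stmt1 {k : Type*} [Field k] [CharZero k]
    (ℓ p : Fin 4 → Fin 4 → k) (hlp : GoodParams ℓ p) :
    (∀ μ ν σ τ : Fin 4,
      ∑ α : Fin 4, ∑ β : Fin 4, Rmat ℓ p μ ν α β * Rmat ℓ p α β σ τ =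
        (if μ = σ then (1 : k) else 0) * (if ν = τ then 1 else 0)) ∧
    ((Matrix.of fun q r : Fin 4 × Fin 4 => Rmat ℓ p q.1 q.2 r.1 r.2) *
      (Matrix.of fun q r : Fin 4 × Fin 4 => Rmat ℓ p q.1 q.2 r.1 r.2) = 1) ∧
    IsUnit (Matrix.of fun q r : Fin 4 × Fin 4 => Rmat ℓ p q.1 q.2 r.1 r.2) := by
  obtain ⟨h1, h2, h3, h4, h5⟩ := hlp
  have collapse : ∀ (μ ν : Fin 4) (f : Fin 4 → Fin 4 → k),
      ∑ α : Fin 4, ∑ β : Fin 4, Rmat ℓ p μ ν α β * f α β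
        = ℓ μ ν * f ν μ + p μ ν * f (pr μ ν).2 (pr μ ν).1 := by
    intro μ ν f
    fin_cases μ <;> fin_cases ν <;>
      simp [Rmat, pr, Fin.sum_univ_four] <;> ring
  have key : ∀ μ ν σ τ : Fin 4,
      ∑ α : Fin 4, ∑ β : Fin 4, Rmat ℓ p μ ν α β * Rmat ℓ p α β σ τ =
        (if μ = σ then (1 : k) else 0) * (if ν = τ then 1 else 0) := by
    intro μ ν σ τ
    rw [collapse μ ν (fun a b => Rmat ℓ p a b σ τ)]
    have e1 : pr ν μ = ((pr μ ν).2, (pr μ ν).1) := by revert μ ν; decide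
    have e2 : pr (pr μ ν).2 (pr μ ν).1 = (ν, μ) := by revert μ ν; decide
    have hl1 : ℓ ν μ = ℓ μ ν := h2 ν μ
    have hl2 : ℓ (pr μ ν).2 (pr μ ν).1 = ℓ μ ν := by
      rw [h2, h3]
    have hp1 : p ν μ = - p μ ν := by rw [h4]
    simp only [Rmat, e1, e2, hl1, hl2, hp1]
    linear_combination ((if μ = σ then (1 : k) else 0) *
      (if ν = τ then (1 : k) else 0)) * h5 μ ν
  have hm : (Matrix.of fun q r : Fin 4 × Fin 4 => Rmat ℓ p q.1 q.2 r.1 r.2) *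
      (Matrix.of fun q r : Fin 4 × Fin 4 => Rmat ℓ p q.1 q.2 r.1 r.2) = 1 := by
    ext q r
    rw [Matrix.mul_apply, Fintype.sum_prod_type]
    simp only [Matrix.of_apply]
    rw [key q.1 q.2 r.1 r.2]
    rcases q with ⟨a, b⟩; rcases r with ⟨c, d⟩
    by_cases hac : a = c <;> by_cases hbd : b = d <;>
      simp [Matrix.one_apply, Prod.ext_iff, hac, hbd]
  exact ⟨key, hm, (Matrix.isUnit_iff_isUnit_det _).mpr (Matrix.isUnit_det_of_right_inverse hm)⟩
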